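/- arXiv:math/0305283 — 3 statements merged into one kernel-verified Lean document; each statement's English description precedes it below -/
import Mathlib

section
/- In a critical system (P, E) (a system minimizing n + e among all systems with I > max(C n^{2/3} e^{2/3}, 3n, 3e), where C = 10^{70}), every point p ∈ P is incident to at least I/(2n) lines of E, and every line ℓ ∈ E is incident to at least I/(2e) points of P. -/
/-- A complex line in `ℂ²`: solutions of `y = a x + b` or a vertical line `x = c`. -/
def IsComplexLine (L : Set (ℂ × ℂ)) : Prop :=
  (∃ a b : ℂ, L = {p : ℂ × ℂ | p.2 = a * p.1 + b}) ∨ ∃ c : ℂ, L = {p : ℂ × ℂ | p.1 = c}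

/-- The number of point–line incidences of a system `(P, E)`. -/
noncomputable def incidences (P : Set (ℂ × ℂ)) (E : Set (Set (ℂ × ℂ))) : ℕ :=
  {pl : (ℂ × ℂ) × Set (ℂ × ℂ) | pl.1 ∈ P ∧ pl.2 ∈ E ∧ pl.1 ∈ pl.2}.ncard

set_option linter.unusedVariables false

section Helpers

lemma line_unique {L1 L2 : Set (ℂ × ℂ)} (h1 : IsComplexLine L1) (h2 : IsComplexLine L2)
    {p q : ℂ × ℂ} (hpq : p ≠ q) (hp1 : p ∈ L1) (hq1 : q ∈ L1) (hp2 : p ∈ L2) (hq2 : q ∈ L2) :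
    L1 = L2 := by
  obtain ⟨a1, b1, rfl⟩ | ⟨c1, rfl⟩ := h1 <;> obtain ⟨a2, b2, rfl⟩ | ⟨c2, rfl⟩ := h2 <;>
    simp only [Set.mem_setOf_eq] at hp1 hq1 hp2 hq2
  · by_cases hx : p.1 = q.1
    · exact absurd (Prod.ext hx (by rw [hp1, hq1, hx])) hpq
    · have hd : p.1 - q.1 ≠ 0 := sub_ne_zero.mpr hx
      have ha : a1 = a2 := by
        have h : (a1 - a2) * (p.1 - q.1) = 0 := by
          linear_combination (hp1.symm.trans hp2) - (hq1.symm.trans hq2)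
        rcases mul_eq_zero.mp h with h | h
        · exact sub_eq_zero.mp h
        · exact absurd h hd
      have hb : b1 = b2 := by linear_combination (hp1.symm.trans hp2) - p.1 * ha
      rw [ha, hb]
  · exact absurd (Prod.ext (hp2.trans hq2.symm) (by rw [hp1, hq1, hp2, hq2])) hpq
  · exact absurd (Prod.ext (hp1.trans hq1.symm) (by rw [hp2, hq2, hp1, hq1])) hpq
  · rw [← hp1, hp2]


lemma inc_set_finite {P : Set (ℂ × ℂ)} {E : Set (Set (ℂ × ℂ))} (hP : P.Finite) (hE : E.Finite) :
    {pl : (ℂ × ℂ) × Set (ℂ × ℂ) | pl.1 ∈ P ∧ pl.2 ∈ E ∧ pl.1 ∈ pl.2}.Finite :=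
  (hP.prod hE).subset (fun pl h => ⟨h.1, h.2.1⟩)

lemma incidences_drop_point {P : Set (ℂ × ℂ)} {E : Set (Set (ℂ × ℂ))}
    (hP : P.Finite) (hE : E.Finite) (p : ℂ × ℂ) :
    incidences P E ≤ incidences (P \ {p}) E + {L ∈ E | p ∈ L}.ncard := by
  classical
  have hfin1 := inc_set_finite (hP.diff (t := {p})) hE
  have hfinD : {L ∈ E | p ∈ L}.Finite := hE.subset (Set.sep_subset _ _)
  have hfin2 : ((fun L => (p, L)) '' {L ∈ E | p ∈ L}).Finite := hfinD.image _
  have hsub : {pl : (ℂ × ℂ) × Set (ℂ × ℂ) | pl.1 ∈ P ∧ pl.2 ∈ E ∧ pl.1 ∈ pl.2} ⊆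
      {pl : (ℂ × ℂ) × Set (ℂ × ℂ) | pl.1 ∈ P \ {p} ∧ pl.2 ∈ E ∧ pl.1 ∈ pl.2} ∪
      ((fun L => (p, L)) '' {L ∈ E | p ∈ L}) := by
    rintro ⟨q, L⟩ ⟨hq, hL, hqL⟩
    by_cases hqp : q = p
    · subst hqp; right; exact ⟨L, ⟨hL, hqL⟩, rfl⟩
    · left; exact ⟨⟨hq, hqp⟩, hL, hqL⟩
  calc incidences P E ≤ ({pl : (ℂ × ℂ) × Set (ℂ × ℂ) | pl.1 ∈ P \ {p} ∧ pl.2 ∈ E ∧ pl.1 ∈ pl.2} ∪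
      ((fun L => (p, L)) '' {L ∈ E | p ∈ L})).ncard :=
        Set.ncard_le_ncard hsub (hfin1.union hfin2)
    _ ≤ incidences (P \ {p}) E + ((fun L => (p, L)) '' {L ∈ E | p ∈ L}).ncard :=
        Set.ncard_union_le _ _
    _ = incidences (P \ {p}) E + {L ∈ E | p ∈ L}.ncard := by
        rw [Set.ncard_image_of_injective _ (fun a b h => by simpa using h)]

lemma incidences_drop_line {P : Set (ℂ × ℂ)} {E : Set (Set (ℂ × ℂ))}
    (hP : P.Finite) (hE : E.Finite) (l : Set (ℂ × ℂ)) :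
    incidences P E ≤ incidences P (E \ {l}) + {p ∈ P | p ∈ l}.ncard := by
  classical
  have hfin1 := inc_set_finite hP (hE.diff (t := {l}))
  have hfinD : {p ∈ P | p ∈ l}.Finite := hP.subset (Set.sep_subset _ _)
  have hfin2 : ((fun q => (q, l)) '' {p ∈ P | p ∈ l}).Finite := hfinD.image _
  have hsub : {pl : (ℂ × ℂ) × Set (ℂ × ℂ) | pl.1 ∈ P ∧ pl.2 ∈ E ∧ pl.1 ∈ pl.2} ⊆
      {pl : (ℂ × ℂ) × Set (ℂ × ℂ) | pl.1 ∈ P ∧ pl.2 ∈ E \ {l} ∧ pl.1 ∈ pl.2} ∪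
      ((fun q => (q, l)) '' {p ∈ P | p ∈ l}) := by
    rintro ⟨q, L⟩ ⟨hq, hL, hqL⟩
    by_cases hLl : L = l
    · subst hLl; right; exact ⟨q, ⟨hq, hqL⟩, rfl⟩
    · left; exact ⟨hq, ⟨hL, hLl⟩, hqL⟩
  calc incidences P E ≤ ({pl : (ℂ × ℂ) × Set (ℂ × ℂ) | pl.1 ∈ P ∧ pl.2 ∈ E \ {l} ∧ pl.1 ∈ pl.2} ∪
      ((fun q => (q, l)) '' {p ∈ P | p ∈ l})).ncard :=
        Set.ncard_le_ncard hsub (hfin1.union hfin2)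
    _ ≤ incidences P (E \ {l}) + ((fun q => (q, l)) '' {p ∈ P | p ∈ l}).ncard :=
        Set.ncard_union_le _ _
    _ = incidences P (E \ {l}) + {p ∈ P | p ∈ l}.ncard := by
        rw [Set.ncard_image_of_injective _ (fun a b h => by simpa using h)]

lemma prod_ncard {α β : Type*} {s : Set α} {t : Set β} (hs : s.Finite) (ht : t.Finite) :
    (s ×ˢ t).ncard = s.ncard * t.ncard := by
  rw [Set.ncard_eq_toFinset_card _ (hs.prod ht), Set.ncard_eq_toFinset_card _ hs,
    Set.ncard_eq_toFinset_card _ ht, ← Finset.card_product]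
  congr 1
  ext x
  simp [Set.Finite.mem_toFinset]

lemma incidences_le_A {P : Set (ℂ × ℂ)} {E : Set (Set (ℂ × ℂ))}
    (hP : P.Finite) (hE : E.Finite) (hlines : ∀ L ∈ E, IsComplexLine L) :
    incidences P E ≤ P.ncard * P.ncard + E.ncard := by
  classical
  set S := {pl : (ℂ × ℂ) × Set (ℂ × ℂ) | pl.1 ∈ P ∧ pl.2 ∈ E ∧ pl.1 ∈ pl.2} with hS
  have hSfin : S.Finite := inc_set_finite hP hE
  set S1 := {pl ∈ S | ∃ q ∈ P, q ≠ pl.1 ∧ q ∈ pl.2} with hS1def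
  have hsplit : incidences P E ≤ S1.ncard + (S \ S1).ncard := by
    have hu : S = S1 ∪ (S \ S1) := (Set.union_diff_cancel (Set.sep_subset _ _)).symm
    calc incidences P E = S.ncard := rfl
      _ = (S1 ∪ (S \ S1)).ncard := by rw [← hu]
      _ ≤ _ := Set.ncard_union_le _ _
  have h1 : S1.ncard ≤ P.ncard * P.ncard := by
    rw [← prod_ncard hP hP]
    apply Set.ncard_le_ncard_of_injOn (ht := hP.prod hP)
      (fun pl => (pl.1, if h : ∃ q ∈ P, q ≠ pl.1 ∧ q ∈ pl.2 then h.choose else pl.1))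
    · rintro pl ⟨hplS, hex⟩
      rw [dif_pos hex]
      exact ⟨hplS.1, hex.choose_spec.1⟩
    · rintro pl ⟨hplS, hex⟩ pl' ⟨hplS', hex'⟩ heq
      dsimp only at heq
      rw [dif_pos hex, dif_pos hex', Prod.mk.injEq] at heq
      obtain ⟨h1, h2⟩ := heq
      obtain ⟨hqP, hqne, hqmem⟩ := hex.choose_spec
      obtain ⟨hqP', hqne', hqmem'⟩ := hex'.choose_spec
      have hL : pl.2 = pl'.2 :=
        line_unique (hlines _ hplS.2.1) (hlines _ hplS'.2.1)
          (Ne.symm hqne) hplS.2.2 hqmem (by rw [h1]; exact hplS'.2.2) (by rw [h2]; exact hqmem')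
      exact Prod.ext h1 hL
  have h2 : (S \ S1).ncard ≤ E.ncard := by
    apply Set.ncard_le_ncard_of_injOn (ht := hE) (fun pl => pl.2)
    · rintro pl ⟨hplS, _⟩; exact hplS.2.1
    · rintro pl ⟨hplS, hno⟩ pl' ⟨hplS', hno'⟩ heq
      have heq' : pl.2 = pl'.2 := heq
      simp only [hS1def, Set.mem_setOf_eq, not_and, not_exists] at hno
      have hni := hno hplS pl'.1 hplS'.1
      have hfst : pl.1 = pl'.1 := by
        by_contra hne
        have hmem2 : pl'.1 ∈ pl.2 := by rw [heq']; exact hplS'.2.2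
        exact hni (fun h => hne h.symm) hmem2
      exact Prod.ext hfst heq'
  omega

lemma incidences_le_B {P : Set (ℂ × ℂ)} {E : Set (Set (ℂ × ℂ))}
    (hP : P.Finite) (hE : E.Finite) (hlines : ∀ L ∈ E, IsComplexLine L) :
    incidences P E ≤ E.ncard * E.ncard + P.ncard := by
  classical
  set S := {pl : (ℂ × ℂ) × Set (ℂ × ℂ) | pl.1 ∈ P ∧ pl.2 ∈ E ∧ pl.1 ∈ pl.2} with hS
  have hSfin : S.Finite := inc_set_finite hP hE
  set S1 := {pl ∈ S | ∃ M ∈ E, M ≠ pl.2 ∧ pl.1 ∈ M} with hS1def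
  have hsplit : incidences P E ≤ S1.ncard + (S \ S1).ncard := by
    have hu : S = S1 ∪ (S \ S1) := (Set.union_diff_cancel (Set.sep_subset _ _)).symm
    calc incidences P E = S.ncard := rfl
      _ = (S1 ∪ (S \ S1)).ncard := by rw [← hu]
      _ ≤ _ := Set.ncard_union_le _ _
  have h1 : S1.ncard ≤ E.ncard * E.ncard := by
    rw [← prod_ncard hE hE]
    apply Set.ncard_le_ncard_of_injOn (ht := hE.prod hE)
      (fun pl => (pl.2, if h : ∃ M ∈ E, M ≠ pl.2 ∧ pl.1 ∈ M then h.choose else pl.2))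
    · rintro pl ⟨hplS, hex⟩
      rw [dif_pos hex]
      exact ⟨hplS.2.1, hex.choose_spec.1⟩
    · rintro pl ⟨hplS, hex⟩ pl' ⟨hplS', hex'⟩ heq
      dsimp only at heq
      rw [dif_pos hex, dif_pos hex', Prod.mk.injEq] at heq
      obtain ⟨h1, h2⟩ := heq
      obtain ⟨hME, hMne, hmem⟩ := hex.choose_spec
      obtain ⟨hME', hMne', hmem'⟩ := hex'.choose_spec
      have hfst : pl.1 = pl'.1 := by
        by_contra hne
        exact hMne ((line_unique (hlines _ hplS.2.1) (hlines _ hME) hne hplS.2.2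
          (by rw [h1]; exact hplS'.2.2) hmem (by rw [h2]; exact hmem')).symm)
      exact Prod.ext hfst h1
  have h2 : (S \ S1).ncard ≤ P.ncard := by
    apply Set.ncard_le_ncard_of_injOn (ht := hP) (fun pl => pl.1)
    · rintro pl ⟨hplS, _⟩; exact hplS.1
    · rintro pl ⟨hplS, hno⟩ pl' ⟨hplS', hno'⟩ heq
      have heq' : pl.1 = pl'.1 := heq
      simp only [hS1def, Set.mem_setOf_eq, not_and, not_exists] at hno
      have hni := hno hplS pl'.2 hplS'.2.1
      have hsnd : pl.2 = pl'.2 := by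
        by_contra hne
        have hmem2 : pl.1 ∈ pl'.2 := by rw [heq']; exact hplS'.2.2
        exact hni (fun h => hne h.symm) hmem2
      exact Prod.ext heq' hsnd
  omega

lemma sq_rpow_third {x : ℝ} (hx : 0 ≤ x) : (x ^ (2:ℕ)) ^ ((1:ℝ)/3) = x ^ ((2:ℝ)/3) := by
  rw [← Real.rpow_natCast x 2, ← Real.rpow_mul hx]
  norm_num

lemma cube_rpow_third {x : ℝ} (hx : 0 ≤ x) : (x ^ (3:ℕ)) ^ ((1:ℝ)/3) = x := by
  rw [← Real.rpow_natCast x 3, ← Real.rpow_mul hx]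
  norm_num

lemma key_rpow {x : ℝ} (hx : 1 ≤ x) :
    (x - 1) ^ ((2:ℝ)/3) ≤ (1 - 1/(2*x)) * x ^ ((2:ℝ)/3) := by
  have hx0 : (0:ℝ) < x := by linarith
  have hB0 : (0:ℝ) ≤ 1 - 1/(2*x) := by
    rw [sub_nonneg, div_le_one (by linarith)]; linarith
  have hfrac : (1 - 1/(2*x)) = (2*x-1)/(2*x) := by field_simp
  have key : (x-1) ^ (2:ℕ) ≤ ((1 - 1/(2*x)) * x ^ ((2:ℝ)/3)) ^ (3:ℕ) := by
    have hcube : ((1 - 1/(2*x)) * x ^ ((2:ℝ)/3)) ^ (3:ℕ)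
        = (1 - 1/(2*x)) ^ (3:ℕ) * x ^ (2:ℕ) := by
      rw [mul_pow]
      congr 1
      rw [← Real.rpow_natCast (x ^ ((2:ℝ)/3)) 3, ← Real.rpow_mul hx0.le,
        ← Real.rpow_natCast x 2]
      norm_num
    rw [hcube, hfrac, div_pow, div_mul_eq_mul_div, le_div_iff₀ (by positivity)]
    nlinarith [hx, hx0]
  calc (x - 1) ^ ((2:ℝ)/3) = ((x-1) ^ (2:ℕ)) ^ ((1:ℝ)/3) := (sq_rpow_third (by linarith)).symm
    _ ≤ (((1 - 1/(2*x)) * x ^ ((2:ℝ)/3)) ^ (3:ℕ)) ^ ((1:ℝ)/3) :=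
        Real.rpow_le_rpow (by positivity) key (by norm_num)
    _ = (1 - 1/(2*x)) * x ^ ((2:ℝ)/3) := cube_rpow_third (by positivity)

-- a ≤ b^2 (a,b ≥ 0) implies a^{1/3} ≤ b^{2/3}, and a = a^{1/3}a^{2/3} for a > 0
lemma third_le {a b : ℝ} (ha : 0 ≤ a) (hb : 0 ≤ b) (h : a ≤ b ^ (2:ℕ)) :
    a ^ ((1:ℝ)/3) ≤ b ^ ((2:ℝ)/3) := by
  calc a ^ ((1:ℝ)/3) ≤ (b ^ (2:ℕ)) ^ ((1:ℝ)/3) := Real.rpow_le_rpow ha h (by norm_num)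
    _ = b ^ ((2:ℝ)/3) := sq_rpow_third hb

lemma split_thirds {a : ℝ} (ha : 0 < a) : a = a ^ ((1:ℝ)/3) * a ^ ((2:ℝ)/3) := by
  rw [← Real.rpow_add ha]
  norm_num

end Helpers

/-- in a critical system `(P, E)` (minimizing `n + e` among systems
with `I > max(C n^{2/3} e^{2/3}, 3n, 3e)`, `C = 10^{70}`), every point is
incident to at least `I/(2n)` lines and every line to at least `I/(2e)` points. -/
theorem stmt2 (C : ℝ) (hC : C = 10 ^ 70)
    (P : Set (ℂ × ℂ)) (E : Set (Set (ℂ × ℂ))) (hPfin : P.Finite) (hEfin : E.Finite)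
    (hlines : ∀ L ∈ E, IsComplexLine L)
    (hbig : (incidences P E : ℝ) >
      max (C * (P.ncard : ℝ) ^ ((2 : ℝ) / 3) * (E.ncard : ℝ) ^ ((2 : ℝ) / 3))
        (max (3 * P.ncard) (3 * E.ncard)))
    (hmin : ∀ (P' : Set (ℂ × ℂ)) (E' : Set (Set (ℂ × ℂ))), P'.Finite → E'.Finite →
      (∀ L ∈ E', IsComplexLine L) →
      (incidences P' E' : ℝ) >
        max (C * (P'.ncard : ℝ) ^ ((2 : ℝ) / 3) * (E'.ncard : ℝ) ^ ((2 : ℝ) / 3))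
          (max (3 * P'.ncard) (3 * E'.ncard)) →
      P.ncard + E.ncard ≤ P'.ncard + E'.ncard) :
    (∀ p ∈ P, (incidences P E : ℝ) / (2 * P.ncard) ≤ ({L ∈ E | p ∈ L}.ncard : ℝ)) ∧
    (∀ L ∈ E, (incidences P E : ℝ) / (2 * E.ncard) ≤ ({p ∈ P | p ∈ L}.ncard : ℝ)) := by
  classical
  obtain ⟨hIC, hrest⟩ := max_lt_iff.mp hbig
  obtain ⟨hI3n, hI3e⟩ := max_lt_iff.mp hrest
  have hIpos : 0 < incidences P E := by
    have h0 : (0:ℝ) < (incidences P E : ℝ) := lt_of_le_of_lt (by positivity) hI3n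
    exact_mod_cast h0
  have hSne : {pl : (ℂ × ℂ) × Set (ℂ × ℂ) | pl.1 ∈ P ∧ pl.2 ∈ E ∧ pl.1 ∈ pl.2}.Nonempty :=
    Set.nonempty_of_ncard_ne_zero (by exact hIpos.ne')
  obtain ⟨pl0, hpl0⟩ := hSne
  have hn1 : 1 ≤ P.ncard := (Set.ncard_pos hPfin).mpr ⟨pl0.1, hpl0.1⟩
  have he1 : 1 ≤ E.ncard := (Set.ncard_pos hEfin).mpr ⟨pl0.2, hpl0.2.1⟩
  have hn1R : (1:ℝ) ≤ (P.ncard : ℝ) := by exact_mod_cast hn1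
  have he1R : (1:ℝ) ≤ (E.ncard : ℝ) := by exact_mod_cast he1
  have hCpos : (0:ℝ) < C := by rw [hC]; positivity
  have hICe : C * (E.ncard : ℝ) < (incidences P E : ℝ) := by
    have hA : (incidences P E : ℝ) ≤ P.ncard * P.ncard + E.ncard := by
      exact_mod_cast incidences_le_A hPfin hEfin hlines
    have hle : (E.ncard : ℝ) ≤ (P.ncard : ℝ) ^ (2:ℕ) := by nlinarith [hI3e, hA]
    have h13 : (E.ncard : ℝ) ^ ((1:ℝ)/3) ≤ (P.ncard:ℝ) ^ ((2:ℝ)/3) :=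
      third_le (by positivity) (by positivity) hle
    calc C * (E.ncard:ℝ) = C * ((E.ncard:ℝ)^((1:ℝ)/3) * (E.ncard:ℝ)^((2:ℝ)/3)) := by
          rw [← split_thirds (by linarith)]
      _ ≤ C * ((P.ncard:ℝ)^((2:ℝ)/3) * (E.ncard:ℝ)^((2:ℝ)/3)) := by
          apply mul_le_mul_of_nonneg_left _ hCpos.le
          exact mul_le_mul_of_nonneg_right h13 (by positivity)
      _ = C * (P.ncard:ℝ)^((2:ℝ)/3) * (E.ncard:ℝ)^((2:ℝ)/3) := by ring
      _ < _ := hIC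
  have hICn : C * (P.ncard : ℝ) < (incidences P E : ℝ) := by
    have hB : (incidences P E : ℝ) ≤ E.ncard * E.ncard + P.ncard := by
      exact_mod_cast incidences_le_B hPfin hEfin hlines
    have hle : (P.ncard : ℝ) ≤ (E.ncard : ℝ) ^ (2:ℕ) := by nlinarith [hI3n, hB]
    have h13 : (P.ncard : ℝ) ^ ((1:ℝ)/3) ≤ (E.ncard:ℝ) ^ ((2:ℝ)/3) :=
      third_le (by positivity) (by positivity) hle
    calc C * (P.ncard:ℝ) = C * ((P.ncard:ℝ)^((1:ℝ)/3) * (P.ncard:ℝ)^((2:ℝ)/3)) := by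
          rw [← split_thirds (by linarith)]
      _ ≤ C * ((P.ncard:ℝ)^((2:ℝ)/3) * (E.ncard:ℝ)^((2:ℝ)/3)) := by
          apply mul_le_mul_of_nonneg_left _ hCpos.le
          calc (P.ncard:ℝ)^((1:ℝ)/3) * (P.ncard:ℝ)^((2:ℝ)/3)
              = (P.ncard:ℝ)^((2:ℝ)/3) * (P.ncard:ℝ)^((1:ℝ)/3) := mul_comm _ _
            _ ≤ (P.ncard:ℝ)^((2:ℝ)/3) * (E.ncard:ℝ)^((2:ℝ)/3) :=
                mul_le_mul_of_nonneg_left h13 (by positivity)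
      _ = C * (P.ncard:ℝ)^((2:ℝ)/3) * (E.ncard:ℝ)^((2:ℝ)/3) := by ring
      _ < _ := hIC
  constructor
  · intro p hp
    by_contra hcon
    push_neg at hcon
    have hdrop := incidences_drop_point hPfin hEfin p
    have hdropR : (incidences P E : ℝ) ≤ (incidences (P \ {p}) E : ℝ) + ({L ∈ E | p ∈ L}.ncard : ℝ) := by
      exact_mod_cast hdrop
    have hn' : (P \ {p}).ncard = P.ncard - 1 := Set.ncard_diff_singleton_of_mem hp
    have hnpos : (0:ℝ) < (P.ncard : ℝ) := by linarith
    have hIone : (incidences P E:ℝ) - (incidences P E:ℝ)/(2*(P.ncard:ℝ))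
        < (incidences (P \ {p}) E : ℝ) := by linarith
    have hIdiv : (incidences P E:ℝ)/(2*(P.ncard:ℝ)) ≤ (incidences P E:ℝ)/2 := by
      apply div_le_div_of_nonneg_left (by positivity) (by norm_num) (by linarith)
    have hIhalf : (incidences P E:ℝ)/2 < (incidences (P \ {p}) E : ℝ) := by linarith
    have hbig' : (incidences (P \ {p}) E : ℝ) >
        max (C * (((P \ {p}).ncard : ℕ) : ℝ) ^ ((2:ℝ)/3) * (E.ncard:ℝ) ^ ((2:ℝ)/3))
          (max (3 * (((P \ {p}).ncard : ℕ) : ℝ)) (3 * (E.ncard:ℝ))) := by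
      rw [hn', Nat.cast_sub hn1, Nat.cast_one]
      have hkey := key_rpow hn1R
      have e23 : (0:ℝ) ≤ (E.ncard:ℝ)^((2:ℝ)/3) := by positivity
      have htpos : (0:ℝ) < 1 - 1/(2*(P.ncard:ℝ)) := by
        have h2 : (1:ℝ)/(2*(P.ncard:ℝ)) ≤ 1/2 := by
          apply div_le_div_of_nonneg_left (by norm_num) (by norm_num) (by linarith)
        linarith
      apply max_lt
      · have step1 : C * ((P.ncard:ℝ)-1)^((2:ℝ)/3) * (E.ncard:ℝ)^((2:ℝ)/3)
            ≤ (1 - 1/(2*(P.ncard:ℝ))) * (C * (P.ncard:ℝ)^((2:ℝ)/3) * (E.ncard:ℝ)^((2:ℝ)/3)) := by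
          calc C * ((P.ncard:ℝ)-1)^((2:ℝ)/3) * (E.ncard:ℝ)^((2:ℝ)/3)
              ≤ C * ((1 - 1/(2*(P.ncard:ℝ))) * (P.ncard:ℝ)^((2:ℝ)/3)) * (E.ncard:ℝ)^((2:ℝ)/3) :=
                mul_le_mul_of_nonneg_right (mul_le_mul_of_nonneg_left hkey hCpos.le) e23
            _ = _ := by ring
        have step2 : (1 - 1/(2*(P.ncard:ℝ))) * (C * (P.ncard:ℝ)^((2:ℝ)/3) * (E.ncard:ℝ)^((2:ℝ)/3))
            < (1 - 1/(2*(P.ncard:ℝ))) * (incidences P E:ℝ) := mul_lt_mul_of_pos_left hIC htpos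
        have step3 : (1 - 1/(2*(P.ncard:ℝ))) * (incidences P E:ℝ)
            = (incidences P E:ℝ) - (incidences P E:ℝ)/(2*(P.ncard:ℝ)) := by ring
        linarith
      · apply max_lt
        · rw [hC] at hICn; linarith
        · rw [hC] at hICe; linarith
    have hfinal := hmin (P \ {p}) E (hPfin.diff (t := {p})) hEfin hlines hbig'
    rw [hn'] at hfinal
    omega
  · intro l hl
    by_contra hcon
    push_neg at hcon
    have hdrop := incidences_drop_line hPfin hEfin l
    have hdropR : (incidences P E : ℝ) ≤ (incidences P (E \ {l}) : ℝ) + ({p ∈ P | p ∈ l}.ncard : ℝ) := by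
      exact_mod_cast hdrop
    have he' : (E \ {l}).ncard = E.ncard - 1 := Set.ncard_diff_singleton_of_mem hl
    have hepos : (0:ℝ) < (E.ncard : ℝ) := by linarith
    have hIone : (incidences P E:ℝ) - (incidences P E:ℝ)/(2*(E.ncard:ℝ))
        < (incidences P (E \ {l}) : ℝ) := by linarith
    have hIdiv : (incidences P E:ℝ)/(2*(E.ncard:ℝ)) ≤ (incidences P E:ℝ)/2 := by
      apply div_le_div_of_nonneg_left (by positivity) (by norm_num) (by linarith)
    have hIhalf : (incidences P E:ℝ)/2 < (incidences P (E \ {l}) : ℝ) := by linarith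
    have hbig' : (incidences P (E \ {l}) : ℝ) >
        max (C * (P.ncard:ℝ) ^ ((2:ℝ)/3) * (((E \ {l}).ncard : ℕ) : ℝ) ^ ((2:ℝ)/3))
          (max (3 * (P.ncard:ℝ)) (3 * (((E \ {l}).ncard : ℕ) : ℝ))) := by
      rw [he', Nat.cast_sub he1, Nat.cast_one]
      have hkey := key_rpow he1R
      have n23 : (0:ℝ) ≤ (P.ncard:ℝ)^((2:ℝ)/3) := by positivity
      have htpos : (0:ℝ) < 1 - 1/(2*(E.ncard:ℝ)) := by
        have h2 : (1:ℝ)/(2*(E.ncard:ℝ)) ≤ 1/2 := by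
          apply div_le_div_of_nonneg_left (by norm_num) (by norm_num) (by linarith)
        linarith
      apply max_lt
      · have step1 : C * (P.ncard:ℝ)^((2:ℝ)/3) * ((E.ncard:ℝ)-1)^((2:ℝ)/3)
            ≤ (1 - 1/(2*(E.ncard:ℝ))) * (C * (P.ncard:ℝ)^((2:ℝ)/3) * (E.ncard:ℝ)^((2:ℝ)/3)) := by
          calc C * (P.ncard:ℝ)^((2:ℝ)/3) * ((E.ncard:ℝ)-1)^((2:ℝ)/3)
              ≤ C * (P.ncard:ℝ)^((2:ℝ)/3) * ((1 - 1/(2*(E.ncard:ℝ))) * (E.ncard:ℝ)^((2:ℝ)/3)) :=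
                mul_le_mul_of_nonneg_left hkey (by positivity)
            _ = _ := by ring
        have step2 : (1 - 1/(2*(E.ncard:ℝ))) * (C * (P.ncard:ℝ)^((2:ℝ)/3) * (E.ncard:ℝ)^((2:ℝ)/3))
            < (1 - 1/(2*(E.ncard:ℝ))) * (incidences P E:ℝ) := mul_lt_mul_of_pos_left hIC htpos
        have step3 : (1 - 1/(2*(E.ncard:ℝ))) * (incidences P E:ℝ)
            = (incidences P E:ℝ) - (incidences P E:ℝ)/(2*(E.ncard:ℝ)) := by ring
        linarith
      · apply max_lt
        · rw [hC] at hICn; linarith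
        · rw [hC] at hICe; linarith
    have hfinal := hmin P (E \ {l}) hPfin (hEfin.diff (t := {l})) (fun L hL => hlines L hL.1) hbig'
    rw [he'] at hfinal
    omega
end

section
/- Let p, q ∈ ℝ^4 with d = dist(p, q), let ℓ₁, ℓ₂ be two orthogonal 2-dimensional linear subspaces of ℝ^4 with ℓ₁ ⊕ ℓ₂ = ℝ^4, and let x = (p + ℓ₁) ∩ (q + ℓ₂) and y = (q + ℓ₁) ∩ (p + ℓ₂) (each intersection is a single point). Then x and y are antipodal points on the sphere of diameter d with center (p+q)/2; i.e., dist(x, (p+q)/2) = dist(y, (p+q)/2) = d/2 and x + y = p + q. -/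
private lemma midp (p q x : EuclideanSpace ℝ (Fin 4))
    (h : inner ℝ (x - p) (x - q) = (0:ℝ)) :
    dist x (midpoint ℝ p q) = dist p q / 2 := by
  rw [dist_eq_norm, dist_eq_norm, eq_div_iff (by norm_num : (2:ℝ) ≠ 0)]
  have h1 : x - midpoint ℝ p q = (2:ℝ)⁻¹ • ((x - p) + (x - q)) := by
    rw [midpoint_eq_smul_add, invOf_eq_inv]; module
  have h2 : p - q = (x - q) - (x - p) := by abel
  rw [h1, norm_smul, h2]
  have e1 : ‖(x - p) + (x - q)‖ = ‖(x - q) - (x - p)‖ := by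
    have := norm_add_sq_real (x - p) (x - q)
    have := norm_sub_sq_real (x - q) (x - p)
    rw [real_inner_comm] at this
    nlinarith [norm_nonneg ((x - p) + (x - q)), norm_nonneg ((x - q) - (x - p))]
  rw [e1]; simp [norm_smul]; ring

/-- let `ℓ₁` be a 2-dimensional subspace of `ℝ⁴` and `ℓ₂ = ℓ₁ᗮ`
(so `ℓ₁ ⊕ ℓ₂ = ℝ⁴` and they are orthogonal 2-subspaces). If
`x ∈ (p + ℓ₁) ∩ (q + ℓ₂)` and `y ∈ (q + ℓ₁) ∩ (p + ℓ₂)`, then `x` and `y` are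
antipodal on the Thales sphere over `pq`: both at distance `dist p q / 2` from
the midpoint, and `x + y = p + q`. -/
theorem stmt6 (ℓ₁ : Submodule ℝ (EuclideanSpace ℝ (Fin 4)))
    (hdim : Module.finrank ℝ ℓ₁ = 2)
    (p q x y : EuclideanSpace ℝ (Fin 4))
    (hx1 : x - p ∈ ℓ₁) (hx2 : x - q ∈ ℓ₁ᗮ)
    (hy1 : y - q ∈ ℓ₁) (hy2 : y - p ∈ ℓ₁ᗮ) :
    dist x (midpoint ℝ p q) = dist p q / 2 ∧
    dist y (midpoint ℝ p q) = dist p q / 2 ∧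
    x + y = p + q := by
  refine ⟨midp p q x (hx2 _ hx1), ?_, ?_⟩
  · rw [dist_comm p q, midpoint_comm]
    exact midp q p y (hy2 _ hy1)
  · have h1 : x + y - p - q ∈ ℓ₁ := by
      have := ℓ₁.add_mem hx1 hy1
      convert this using 1; abel
    have h2 : x + y - p - q ∈ ℓ₁ᗮ := by
      have := ℓ₁ᗮ.add_mem hx2 hy2
      convert this using 1; abel
    have h0 : x + y - p - q = 0 := by
      have := (Submodule.mem_inf.mpr ⟨h1, h2⟩)
      rwa [Submodule.inf_orthogonal_eq_bot, Submodule.mem_bot] at this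
    have := sub_eq_zero.mp (by rwa [sub_sub] at h0)
    exact this
end

section
/- Assume the complex Szemerédi–Trotter bound (incidences of n points and e complex lines in ℂ² is O(n^{2/3}e^{2/3} + n + e)). Then there is an absolute constant c₁ > 0 such that for any n points in ℂ², either there are at least c₁ n² complex lines each incident to at least two of the points, or some complex line is incident to at least n/100 of the points. -/
open scoped Classical


noncomputable def lineThrough (p q : ℂ × ℂ) : Set (ℂ × ℂ) :=
  if p.1 = q.1 then {r : ℂ × ℂ | r.1 = p.1}
  else {r : ℂ × ℂ | r.2 = ((q.2 - p.2) / (q.1 - p.1)) * r.1 + (p.2 - ((q.2 - p.2) / (q.1 - p.1)) * p.1)}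

lemma isComplexLine_lineThrough (p q : ℂ × ℂ) : IsComplexLine (lineThrough p q) := by
  unfold lineThrough
  split
  · exact Or.inr ⟨p.1, rfl⟩
  · exact Or.inl ⟨_, _, rfl⟩

lemma left_mem_lineThrough (p q : ℂ × ℂ) : p ∈ lineThrough p q := by
  unfold lineThrough
  split
  · exact rfl
  · show p.2 = _ * p.1 + (p.2 - _ * p.1); ring

lemma right_mem_lineThrough (p q : ℂ × ℂ) : q ∈ lineThrough p q := by
  unfold lineThrough
  split
  · exact (Eq.symm (by assumption))
  · show q.2 = ((q.2 - p.2) / (q.1 - p.1)) * q.1 + (p.2 - ((q.2 - p.2) / (q.1 - p.1)) * p.1)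
    have h : q.1 - p.1 ≠ 0 := sub_ne_zero.2 (fun h => (by assumption : ¬ p.1 = q.1) h.symm)
    field_simp
    ring

lemma line_unique_s10 {L M : Set (ℂ × ℂ)} (hL : IsComplexLine L) (hM : IsComplexLine M)
    {p q : ℂ × ℂ} (hpq : p ≠ q) (hpL : p ∈ L) (hqL : q ∈ L) (hpM : p ∈ M) (hqM : q ∈ M) :
    L = M := by
  have key : ∀ N : Set (ℂ × ℂ), IsComplexLine N → p ∈ N → q ∈ N → N = lineThrough p q := by
    rintro N (⟨a, b, rfl⟩ | ⟨c, rfl⟩) hpN hqN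
    · have hp : p.2 = a * p.1 + b := hpN
      have hq : q.2 = a * q.1 + b := hqN
      have hx : p.1 ≠ q.1 := by
        intro h
        apply hpq
        have : p.2 = q.2 := by rw [hp, hq, h]
        exact Prod.ext h this
      have hxx : q.1 - p.1 ≠ 0 := sub_ne_zero.2 (Ne.symm hx)
      have ha : (q.2 - p.2) / (q.1 - p.1) = a := by
        rw [hp, hq]; field_simp; ring
      unfold lineThrough
      rw [if_neg hx]
      ext r
      simp only [Set.mem_setOf_eq, ha]
      constructor
      · intro h; linear_combination h - hp
      · intro h; linear_combination h + hp
    · have hp : p.1 = c := hpN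
      have hq : q.1 = c := hqN
      have hx : p.1 = q.1 := by rw [hp, hq]
      unfold lineThrough
      rw [if_pos hx]
      ext r
      simp only [Set.mem_setOf_eq, hp]
  rw [key L hL hpL hqL, key M hM hpM hqM]

lemma inter_card_le_one {L M : Set (ℂ × ℂ)} (hL : IsComplexLine L) (hM : IsComplexLine M)
    (hLM : L ≠ M) (Pf : Finset (ℂ × ℂ)) :
    (Pf.filter (fun p => p ∈ L ∧ p ∈ M)).card ≤ 1 := by
  rw [Finset.card_le_one]
  intro a ha b hb
  simp only [Finset.mem_filter] at ha hb
  by_contra hab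
  exact hLM (line_unique_s10 hL hM hab ha.2.1 hb.2.1 ha.2.2 hb.2.2)

open Finset in
lemma greedy_aux (Pf : Finset (ℂ × ℂ)) (t : ℕ) :
    ∀ (S : Finset (Set (ℂ × ℂ))), (∀ L ∈ S, IsComplexLine L) →
    (∀ L ∈ S, t ≤ (Pf.filter (· ∈ L)).card) →
    (S.card * t : ℤ) ≤ (Pf.filter (fun p => ∃ L ∈ S, p ∈ L)).card + S.card ^ 2 := by
  intro S
  induction S using Finset.induction_on with
  | empty => intro _ _; simp
  | @insert a S ha IH =>
    intro hlines hpts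
    have hIH := IH (fun L hL => hlines L (mem_insert_of_mem hL))
      (fun L hL => hpts L (mem_insert_of_mem hL))
    set X := Pf.filter (· ∈ a) with hX
    set Y := Pf.filter (fun p => ∃ L ∈ S, p ∈ L) with hY
    have hcov : Pf.filter (fun p => ∃ L ∈ insert a S, p ∈ L) = X ∪ Y := by
      ext p
      simp only [hX, hY, Finset.mem_union, Finset.mem_filter, Finset.mem_insert]
      constructor
      · rintro ⟨hp, L, (rfl | hL), hpL⟩
        · exact Or.inl ⟨hp, hpL⟩
        · exact Or.inr ⟨hp, L, hL, hpL⟩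
      · rintro (⟨hp, hpa⟩ | ⟨hp, L, hL, hpL⟩)
        · exact ⟨hp, a, Or.inl rfl, hpa⟩
        · exact ⟨hp, L, Or.inr hL, hpL⟩
    have hinter : (X ∩ Y).card ≤ S.card := by
      have hsub : X ∩ Y ⊆ S.biUnion (fun L' => Pf.filter (fun p => p ∈ a ∧ p ∈ L')) := by
        intro p hp
        simp only [hX, hY, Finset.mem_inter, Finset.mem_filter] at hp
        obtain ⟨⟨hpf, hpa⟩, ⟨_, L, hL, hpL⟩⟩ := hp
        exact Finset.mem_biUnion.2 ⟨L, hL, Finset.mem_filter.2 ⟨hpf, hpa, hpL⟩⟩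
      refine (Finset.card_le_card hsub).trans ((Finset.card_biUnion_le).trans ?_)
      refine (Finset.sum_le_card_nsmul _ _ 1 ?_).trans (by simp)
      intro L' hL'
      have haL' : a ≠ L' := fun h => ha (h ▸ hL')
      exact inter_card_le_one (hlines a (mem_insert_self a S))
        (hlines L' (mem_insert_of_mem hL')) haL' Pf
    have hXcard : t ≤ X.card := hpts a (mem_insert_self a S)
    have hunion : (X.card : ℤ) + Y.card - (X ∩ Y).card ≤ ((X ∪ Y).card : ℤ) := by
      have := Finset.card_union_add_card_inter X Y
      have h2 : (X ∪ Y).card + (X ∩ Y).card = X.card + Y.card := this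
      push_cast [← h2]
      ring_nf
      omega
    rw [hcov, Finset.card_insert_of_notMem ha]
    push_cast
    nlinarith [hIH, hinter, hXcard, hunion]

lemma greedy (Pf : Finset (ℂ × ℂ)) (S : Finset (Set (ℂ × ℂ))) (t : ℕ)
    (hlines : ∀ L ∈ S, IsComplexLine L)
    (hpts : ∀ L ∈ S, t ≤ (Pf.filter (· ∈ L)).card) :
    (S.card * t : ℤ) ≤ Pf.card + S.card ^ 2 := by
  refine (greedy_aux Pf t S hlines hpts).trans ?_
  have := Finset.card_filter_le Pf (fun p => ∃ L ∈ S, p ∈ L)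
  omega
/-- Unconditional bound: few very rich lines. -/
lemma rich_unconditional (Pf : Finset (ℂ × ℂ)) (S : Finset (Set (ℂ × ℂ))) (t : ℕ)
    (hlines : ∀ L ∈ S, IsComplexLine L)
    (hpts : ∀ L ∈ S, t ≤ (Pf.filter (· ∈ L)).card)
    (ht : 16 * Pf.card ≤ t * t) (ht8 : 8 ≤ t) :
    (S.card : ℝ) * t ≤ 2 * Pf.card := by
  set n := Pf.card with hn
  set e := S.card with he
  by_contra hcon
  push_neg at hcon
  set q := 2 * n / t with hq
  have htpos : 0 < t := by omega
  have hdm : t * q + 2 * n % t = 2 * n := by rw [hq]; exact Nat.div_add_mod _ _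
  have hmod := Nat.mod_lt (2 * n) htpos
  have hqe : q + 1 ≤ e := by
    by_contra hh
    push_neg at hh
    have h1 : e ≤ q := by omega
    have h2 : (e : ℝ) * t ≤ (q : ℝ) * t := by
      have : (e:ℝ) ≤ q := by exact_mod_cast h1
      nlinarith [(by positivity : (0:ℝ) ≤ (t:ℝ))]
    have hqt : (q : ℝ) * t ≤ 2 * n := by
      have : q * t ≤ 2 * n := Nat.div_mul_le_self _ _
      exact_mod_cast this
    linarith
  obtain ⟨S', hS'sub, hS'card⟩ := Finset.exists_subset_card_eq hqe
  have hgreedy := greedy Pf S' t (fun L hL => hlines L (hS'sub hL))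
    (fun L hL => hpts L (hS'sub hL))
  rw [hS'card] at hgreedy
  -- now: (q+1) * t ≤ n + (q+1)^2  in ℤ; with q*t ≤ 2n < (q+1)*t, 16n ≤ t², t ≥ 8: contradiction
  have h8q : 8 * q ≤ t := by
    by_contra hh
    push_neg at hh
    have : t * (t + 1) ≤ t * (8 * q) := Nat.mul_le_mul_left t (by omega)
    have hqt : q * t ≤ 2 * n := Nat.div_mul_le_self _ _
    nlinarith
  have hRq : (q : ℝ) * t ≤ 2 * n := by exact_mod_cast Nat.div_mul_le_self _ _
  have hRq2 : (2 * n : ℝ) < (q + 1) * t := by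
    have hexp : (q + 1) * t = t * q + t := by ring
    have : 2 * n < (q + 1) * t := by omega
    exact_mod_cast this
  have hRg : ((q : ℝ) + 1) * t ≤ n + ((q : ℝ) + 1) ^ 2 := by exact_mod_cast hgreedy
  have hR8 : 8 * (q : ℝ) ≤ t := by exact_mod_cast h8q
  have hRt : (8 : ℝ) ≤ t := by exact_mod_cast ht8
  have hRn : 16 * (n : ℝ) ≤ t * t := by exact_mod_cast ht
  nlinarith [hRq2, hRg, hR8, hRt, hRn, sq_nonneg ((q:ℝ)+1)]
lemma incidences_coe (P : Set (ℂ × ℂ)) (hP : P.Finite) (S : Finset (Set (ℂ × ℂ))) :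
    incidences P ↑S = ∑ L ∈ S, (hP.toFinset.filter (· ∈ L)).card := by
  have hset : {pl : (ℂ × ℂ) × Set (ℂ × ℂ) | pl.1 ∈ P ∧ pl.2 ∈ (↑S : Set (Set (ℂ × ℂ))) ∧ pl.1 ∈ pl.2}
      = ↑((hP.toFinset ×ˢ S).filter (fun pl => pl.1 ∈ pl.2)) := by
    ext pl
    simp only [Set.mem_setOf_eq, Finset.coe_filter, Finset.mem_product, Set.Finite.mem_toFinset,
      Finset.mem_coe, Set.mem_setOf_eq]
    tauto
  rw [incidences, hset, Set.ncard_coe_finset]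
  rw [Finset.card_filter]
  rw [Finset.sum_product_right]
  congr 1
  ext L
  rw [Finset.card_filter]

/-- Szemerédi–Trotter consequence: count of `t`-rich lines. -/
lemma rich_ST (A : ℝ)
    (hST : ∀ (P : Set (ℂ × ℂ)) (E : Set (Set (ℂ × ℂ))), P.Finite → E.Finite →
      (∀ L ∈ E, IsComplexLine L) →
      (incidences P E : ℝ) ≤
        A * ((P.ncard : ℝ) ^ ((2 : ℝ) / 3) * (E.ncard : ℝ) ^ ((2 : ℝ) / 3) +
          P.ncard + E.ncard))
    (P : Set (ℂ × ℂ)) (hP : P.Finite) (S : Finset (Set (ℂ × ℂ)))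
    (hlines : ∀ L ∈ S, IsComplexLine L) (t : ℕ)
    (hpts : ∀ L ∈ S, t ≤ (hP.toFinset.filter (· ∈ L)).card)
    (htB : 2 * max A 1 ≤ t) :
    (S.card : ℝ) ≤ 64 * (max A 1) ^ 3 * (P.ncard : ℝ) ^ 2 / (t : ℝ) ^ 3
      + 4 * (max A 1) * (P.ncard : ℝ) / t := by
  set B := max A 1 with hB
  have hB1 : (1 : ℝ) ≤ B := le_max_right _ _
  have hAB : A ≤ B := le_max_left _ _
  have ht2 : (2 : ℝ) ≤ t := by nlinarith
  have htpos : (0 : ℝ) < t := by linarith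
  set n := P.ncard with hn
  set e := S.card with he
  have hnn : (0:ℝ) ≤ (n:ℝ) := Nat.cast_nonneg n
  have hen : (0:ℝ) ≤ (e:ℝ) := Nat.cast_nonneg e
  -- incidences lower bound
  have hinc : (e * t : ℕ) ≤ incidences P ↑S := by
    rw [incidences_coe P hP S]
    calc e * t = ∑ _L ∈ S, t := by rw [Finset.sum_const, smul_eq_mul]
    _ ≤ _ := Finset.sum_le_sum hpts
  have hScoe : (↑S : Set (Set (ℂ × ℂ))).ncard = e := Set.ncard_coe_finset S
  have hup := hST P ↑S hP (S.finite_toSet) hlines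
  rw [hScoe] at hup
  have hrpow_n : (0:ℝ) ≤ (n:ℝ) ^ ((2:ℝ)/3) := Real.rpow_nonneg hnn _
  have hrpow_e : (0:ℝ) ≤ (e:ℝ) ^ ((2:ℝ)/3) := Real.rpow_nonneg hen _
  set u : ℝ := (n:ℝ) ^ ((2:ℝ)/3) * (e:ℝ) ^ ((2:ℝ)/3) with hu
  have hu0 : 0 ≤ u := mul_nonneg hrpow_n hrpow_e
  have hkey : (e:ℝ) * t ≤ B * (u + n + e) := by
    have h1 : (e:ℝ) * t ≤ (incidences P ↑S : ℝ) := by exact_mod_cast hinc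
    have h2 : A * (u + n + e) ≤ B * (u + n + e) := by
      apply mul_le_mul_of_nonneg_right hAB
      positivity
    calc (e:ℝ) * t ≤ A * (u + n + e) := by rw [← hn] at hup; linarith [hup]
    _ ≤ _ := h2
  have hhalf : (e:ℝ) * t ≤ 2 * B * (u + n) := by nlinarith
  by_cases hcase : u ≤ (n:ℝ)
  · -- e ≤ 4 B n / t
    have : (e:ℝ) * t ≤ 4 * B * n := by nlinarith
    have h1 : (e:ℝ) ≤ 4 * B * n / t := by
      rw [le_div_iff₀ htpos]; linarith
    have h2 : (0:ℝ) ≤ 64 * B ^ 3 * (n:ℝ) ^ 2 / (t:ℝ) ^ 3 := by positivity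
    linarith
  · push_neg at hcase
    have hcube : ((e:ℝ) * t) ^ 3 ≤ (4 * B * u) ^ 3 := by
      apply pow_le_pow_left₀ (by positivity)
      nlinarith
    have hu3 : u ^ 3 = (n:ℝ) ^ 2 * (e:ℝ) ^ 2 := by
      rw [hu, mul_pow]
      have hn3 : ((n:ℝ) ^ ((2:ℝ)/3)) ^ (3:ℕ) = (n:ℝ) ^ (2:ℕ) := by
        rw [← Real.rpow_natCast ((n:ℝ) ^ ((2:ℝ)/3)) 3, ← Real.rpow_mul hnn]
        norm_num
      have he3 : ((e:ℝ) ^ ((2:ℝ)/3)) ^ (3:ℕ) = (e:ℝ) ^ (2:ℕ) := by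
        rw [← Real.rpow_natCast ((e:ℝ) ^ ((2:ℝ)/3)) 3, ← Real.rpow_mul hen]
        norm_num
      rw [hn3, he3]
    have hfinal : (e:ℝ) * (t:ℝ)^3 ≤ 64 * B^3 * (n:ℝ)^2 := by
      rcases eq_or_lt_of_le hen with h0 | hepos
      · rw [← h0, zero_mul]; positivity
      · have hexp : (e:ℝ)^3 * (t:ℝ)^3 ≤ 64 * B^3 * ((n:ℝ)^2 * (e:ℝ)^2) := by
          calc (e:ℝ)^3 * (t:ℝ)^3 = ((e:ℝ)*t)^3 := by ring
          _ ≤ (4*B*u)^3 := hcube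
          _ = 64 * B^3 * u^3 := by ring
          _ = _ := by rw [hu3]
        by_contra hcon
        push_neg at hcon
        have h3 : (e:ℝ)^2 * (64*B^3*(n:ℝ)^2) < (e:ℝ)^2 * ((e:ℝ)*(t:ℝ)^3) :=
          mul_lt_mul_of_pos_left hcon (by positivity)
        nlinarith [hexp]
    have h1 : (e:ℝ) ≤ 64 * B^3 * (n:ℝ)^2 / (t:ℝ)^3 := by
      rw [le_div_iff₀ (by positivity)]; linarith
    have h2 : (0:ℝ) ≤ 4 * B * (n:ℝ) / t := by positivity
    linarith
lemma sum_two_mul (m : ℕ) : ∑ j ∈ Finset.range m, 2 * j = m * m - m := by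
  rw [← Finset.mul_sum, mul_comm, Finset.sum_range_id_mul_two]
  cases m with
  | zero => simp
  | succ l =>
    have h : (l+1)*(l+1) = (l+1)*l + (l+1) := by ring
    simp only [Nat.succ_sub_one]
    omega

lemma range_filter_lt (n c : ℕ) (h : c ≤ n) :
    (Finset.range n).filter (fun j => j < c) = Finset.range c := by
  ext j
  simp only [Finset.mem_filter, Finset.mem_range]
  omega

lemma sum_sq_swap (Pf : Finset (ℂ × ℂ)) (TK : Finset (Set (ℂ × ℂ))) :
    ∑ L ∈ TK, ((Pf.filter (· ∈ L)).card * (Pf.filter (· ∈ L)).card - (Pf.filter (· ∈ L)).card)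
      = ∑ j ∈ Finset.range Pf.card,
          2 * j * ((TK.filter (fun L => j < (Pf.filter (· ∈ L)).card)).card) := by
  have hterm : ∀ L ∈ TK,
      (Pf.filter (· ∈ L)).card * (Pf.filter (· ∈ L)).card - (Pf.filter (· ∈ L)).card
        = ∑ j ∈ Finset.range Pf.card, if j < (Pf.filter (· ∈ L)).card then 2 * j else 0 := by
    intro L _
    rw [← Finset.sum_filter, range_filter_lt _ _ (Finset.card_filter_le _ _), sum_two_mul]
  rw [Finset.sum_congr rfl hterm, Finset.sum_comm]
  refine Finset.sum_congr rfl (fun j _ => ?_)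
  rw [← Finset.sum_filter, Finset.sum_const, smul_eq_mul, mul_comm]

lemma two_le_ncard_of {P L : Set (ℂ × ℂ)} (hP : P.Finite) {a b : ℂ × ℂ}
    (ha : a ∈ P ∩ L) (hb : b ∈ P ∩ L) (hab : a ≠ b) : 2 ≤ (P ∩ L).ncard :=
  (Set.one_lt_ncard_iff (hP.subset Set.inter_subset_left)).2 ⟨a, b, ha, hb, hab⟩

lemma myIte_nonneg (c : Prop) [Decidable c] (x : ℝ) (hx : 0 ≤ x) : 0 ≤ if c then x else 0 := by
  split_ifs with h
  · exact hx
  · exact le_refl 0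

lemma range_filter_ge (n c : ℕ) :
    (Finset.range n).filter (fun j => c ≤ j) = Finset.Ico c n := by
  ext j
  simp only [Finset.mem_filter, Finset.mem_range, Finset.mem_Ico]
  omega

lemma ico_image_succ (c n : ℕ) :
    (Finset.Ico c n).image (fun j => j + 1) = Finset.Ioc c n := by
  ext t
  simp only [Finset.mem_image, Finset.mem_Ico, Finset.mem_Ioc]
  constructor
  · rintro ⟨a, ⟨h1, h2⟩, rfl⟩; omega
  · intro ⟨h1, h2⟩; exact ⟨t - 1, by omega, by omega⟩

set_option maxHeartbeats 4000000 in
/-- complex Beck theorem: assuming the complex Szemerédi–Trotter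
bound, there is `c₁ > 0` such that any `n` points in `ℂ²` either determine at
least `c₁ n²` complex lines each containing at least two of the points, or some
complex line contains at least `n/100` of the points. -/
theorem stmt10
    (A : ℝ)
    (hST : ∀ (P : Set (ℂ × ℂ)) (E : Set (Set (ℂ × ℂ))), P.Finite → E.Finite →
      (∀ L ∈ E, IsComplexLine L) →
      (incidences P E : ℝ) ≤
        A * ((P.ncard : ℝ) ^ ((2 : ℝ) / 3) * (E.ncard : ℝ) ^ ((2 : ℝ) / 3) +
          P.ncard + E.ncard)) :
    ∃ c₁ : ℝ, 0 < c₁ ∧ ∀ (P : Set (ℂ × ℂ)), P.Finite →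
      c₁ * (P.ncard : ℝ) ^ 2 ≤
          ({L : Set (ℂ × ℂ) | IsComplexLine L ∧ 2 ≤ (P ∩ L).ncard}.ncard : ℝ) ∨
        ∃ L : Set (ℂ × ℂ), IsComplexLine L ∧ (P.ncard : ℝ) / 100 ≤ ((P ∩ L).ncard : ℝ) := by
  classical
  set B := max A 1 with hB
  have hB1 : (1:ℝ) ≤ B := le_max_right _ _
  have hB0 : (0:ℝ) < B := by linarith
  set K : ℕ := ⌈16000 * B ^ 3⌉₊ with hKdef
  have hKR : 16000 * B ^ 3 ≤ (K:ℝ) := Nat.le_ceil _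
  have hB3 : B ≤ B ^ 3 := by
    nlinarith [mul_nonneg (mul_nonneg (by linarith : (0:ℝ) ≤ B - 1) (by linarith : (0:ℝ) ≤ B))
      (by linarith : (0:ℝ) ≤ B + 1)]
  have hB31 : (1:ℝ) ≤ B ^ 3 := by nlinarith [hB3]
  have hBK : 2 * B ≤ (K:ℝ) := by linarith
  have hK16 : (16000:ℝ) ≤ K := by linarith
  have hK0 : (0:ℝ) < K := by linarith
  set N : ℕ := ⌈80 * B * (K:ℝ) + 409600 * B ^ 2 + 200⌉₊ with hNdef
  have hNR : 80 * B * (K:ℝ) + 409600 * B ^ 2 + 200 ≤ (N:ℝ) := Nat.le_ceil _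
  have hN0 : (0:ℝ) < N := by nlinarith
  refine ⟨min (1/(2*(K:ℝ)^2)) (1/(N:ℝ)^2), lt_min (by positivity) (by positivity), ?_⟩
  intro P hP
  set n := P.ncard with hn
  by_cases hBig : ∃ L, IsComplexLine L ∧ (n:ℝ)/100 ≤ ((P ∩ L).ncard : ℝ)
  · exact Or.inr hBig
  push_neg at hBig
  left
  set Pf := hP.toFinset with hPf
  have hPfcard : Pf.card = n := by
    rw [hPf, hn, Set.ncard_eq_toFinset_card _ hP]
  have hPL : ∀ L : Set (ℂ × ℂ), P ∩ L = ↑(Pf.filter (· ∈ L)) := by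
    intro L; ext x
    simp only [Set.mem_inter_iff, Finset.coe_filter, Set.mem_setOf_eq, hPf,
      Set.Finite.mem_toFinset]
  have hkL : ∀ L : Set (ℂ × ℂ), (P ∩ L).ncard = (Pf.filter (· ∈ L)).card := by
    intro L; rw [hPL L, Set.ncard_coe_finset]
  have hsmall : ∀ L : Set (ℂ × ℂ), IsComplexLine L → 100 * (Pf.filter (· ∈ L)).card < n := by
    intro L hL
    have h := hBig L hL
    rw [hkL L] at h
    have h' : (100:ℝ) * ((Pf.filter (· ∈ L)).card : ℝ) < n := by linarith
    exact_mod_cast h'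
  -- the set of rich lines is finite
  have hTsub : {L : Set (ℂ × ℂ) | IsComplexLine L ∧ 2 ≤ (P ∩ L).ncard}
      ⊆ (fun z : (ℂ × ℂ) × (ℂ × ℂ) => lineThrough z.1 z.2) '' (P ×ˢ P) := by
    rintro L ⟨hline, h2⟩
    have hfin : (P ∩ L).Finite := hP.subset Set.inter_subset_left
    obtain ⟨a, b, ha, hb, hab⟩ := (Set.one_lt_ncard_iff hfin).1 (by omega)
    refine ⟨(a, b), Set.mem_prod.2 ⟨ha.1, hb.1⟩, ?_⟩
    exact (line_unique_s10 hline (isComplexLine_lineThrough a b) hab ha.2 hb.2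
      (left_mem_lineThrough a b) (right_mem_lineThrough a b)).symm
  have hTfin : {L : Set (ℂ × ℂ) | IsComplexLine L ∧ 2 ≤ (P ∩ L).ncard}.Finite :=
    ((hP.prod hP).image _).subset hTsub
  set Tf := hTfin.toFinset with hTfdef
  have hm : {L : Set (ℂ × ℂ) | IsComplexLine L ∧ 2 ≤ (P ∩ L).ncard}.ncard = Tf.card :=
    Set.ncard_eq_toFinset_card _ hTfin
  have hTmem : ∀ L : Set (ℂ × ℂ),
      L ∈ Tf ↔ IsComplexLine L ∧ 2 ≤ (Pf.filter (· ∈ L)).card := by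
    intro L
    rw [hTfdef, Set.Finite.mem_toFinset, Set.mem_setOf_eq, hkL L]
  rw [hm]
  -- trivial case n = 0
  rcases Nat.eq_zero_or_pos n with hn0 | hnpos
  · rw [hn0]
    push_cast
    simp only [ne_eq, OfNat.ofNat_ne_zero, not_false_eq_true, zero_pow, mul_zero]
    positivity
  -- n > 100
  obtain ⟨p, hp⟩ : P.Nonempty := Set.nonempty_of_ncard_ne_zero (by omega)
  have hn100 : 100 < n := by
    have hline : IsComplexLine {r : ℂ × ℂ | r.1 = p.1} := Or.inr ⟨p.1, rfl⟩
    have h1 : 0 < (Pf.filter (· ∈ {r : ℂ × ℂ | r.1 = p.1})).card := by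
      rw [← hkL]
      rw [Set.ncard_pos (hP.subset Set.inter_subset_left)]
      exact ⟨p, hp, rfl⟩
    have := hsmall _ hline
    omega
  -- at least one rich line
  have hTf1 : 1 ≤ Tf.card := by
    obtain ⟨a, b, ha, hb, hab⟩ := (Set.one_lt_ncard_iff hP).1 (by omega)
    refine Finset.card_pos.2 ⟨lineThrough a b, ?_⟩
    rw [hTmem, ← hkL]
    exact ⟨isComplexLine_lineThrough a b,
      two_le_ncard_of hP ⟨ha, left_mem_lineThrough a b⟩ ⟨hb, right_mem_lineThrough a b⟩ hab⟩
  by_cases hnN : n < N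
  · -- small case
    have h1 : (n:ℝ)^2 ≤ (N:ℝ)^2 := by
      have : (n:ℝ) ≤ N := by exact_mod_cast hnN.le
      nlinarith [Nat.cast_nonneg (α := ℝ) n]
    have h2 : min (1/(2*(K:ℝ)^2)) (1/(N:ℝ)^2) * (n:ℝ)^2 ≤ 1 := by
      calc min (1/(2*(K:ℝ)^2)) (1/(N:ℝ)^2) * (n:ℝ)^2 ≤ (1/(N:ℝ)^2) * (N:ℝ)^2 := by
            apply mul_le_mul (min_le_right _ _) h1 (by positivity) (by positivity)
      _ = 1 := by field_simp
    have h3 : (1:ℝ) ≤ Tf.card := by exact_mod_cast hTf1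
    linarith
  push_neg at hnN
  -- main case: n ≥ N
  -- ===== main case : N ≤ n =====
  have hnNR : (N:ℝ) ≤ (n:ℝ) := by exact_mod_cast hnN
  have hn0' : (0:ℝ) ≤ (n:ℝ) := Nat.cast_nonneg n
  have h80 : 80 * B * (K:ℝ) ≤ (n:ℝ) := by linarith [hNR, sq_nonneg B]
  have hn200 : (200:ℝ) ≤ (n:ℝ) := by linarith [hNR, sq_nonneg B, mul_nonneg (mul_nonneg (by norm_num : (0:ℝ) ≤ 80) (by linarith : (0:ℝ) ≤ B)) (le_of_lt hK0)]
  have hKnR : (K:ℝ) ≤ (n:ℝ) := by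
    nlinarith [mul_nonneg (le_of_lt hK0) (by linarith : (0:ℝ) ≤ 80*B - 1)]
  have hKn : K ≤ n := by exact_mod_cast hKnR
  have hK16n : 16000 ≤ K := by exact_mod_cast hK16
  have hsqB : 640 * B ≤ Real.sqrt n := by
    have h1 : (409600 : ℝ) * B ^ 2 ≤ (n:ℝ) := by
      linarith [hNR, mul_nonneg (mul_nonneg (by norm_num : (0:ℝ) ≤ 80) (by linarith : (0:ℝ) ≤ B)) (le_of_lt hK0)]
    have h2 : Real.sqrt (409600 * B ^ 2) = 640 * B := by
      rw [show (409600:ℝ) * B ^ 2 = (640*B)^2 by ring, Real.sqrt_sq (by positivity)]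
    calc 640 * B = Real.sqrt (409600 * B ^ 2) := h2.symm
    _ ≤ Real.sqrt n := Real.sqrt_le_sqrt h1
  have hPmem : ∀ x : ℂ × ℂ, x ∈ Pf ↔ x ∈ P := fun x => hP.mem_toFinset
  -- the double counting identity
  have hbi : Pf.offDiag = Tf.biUnion (fun L => (Pf.filter (· ∈ L)).offDiag) := by
    ext z
    simp only [Finset.mem_offDiag, Finset.mem_biUnion, Finset.mem_filter]
    constructor
    · rintro ⟨h1, h2, hne⟩
      refine ⟨lineThrough z.1 z.2, (hTmem _).2 ⟨isComplexLine_lineThrough _ _, ?_⟩,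
        ⟨h1, left_mem_lineThrough _ _⟩, ⟨h2, right_mem_lineThrough _ _⟩, hne⟩
      rw [← hkL]
      exact two_le_ncard_of hP ⟨(hPmem _).1 h1, left_mem_lineThrough _ _⟩
        ⟨(hPmem _).1 h2, right_mem_lineThrough _ _⟩ hne
    · rintro ⟨L, _, ⟨h1, _⟩, ⟨h2, _⟩, hne⟩
      exact ⟨h1, h2, hne⟩
  have hcard1 : Pf.offDiag.card = ∑ L ∈ Tf, ((Pf.filter (· ∈ L)).offDiag).card := by
    rw [hbi]
    refine Finset.card_biUnion ?_
    intro L hL M hM hLM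
    rw [Function.onFun, Finset.disjoint_left]
    intro z hzL hzM
    rw [Finset.mem_offDiag] at hzL hzM
    exact hLM (line_unique_s10 ((hTmem L).1 hL).1 ((hTmem M).1 hM).1 hzL.2.2
      (Finset.mem_filter.1 hzL.1).2 (Finset.mem_filter.1 hzL.2.1).2
      (Finset.mem_filter.1 hzM.1).2 (Finset.mem_filter.1 hzM.2.1).2)
  have hsumN : n * n - n = ∑ L ∈ Tf,
      ((Pf.filter (· ∈ L)).card * (Pf.filter (· ∈ L)).card - (Pf.filter (· ∈ L)).card) := by
    have h := hcard1
    rw [Finset.offDiag_card, hPfcard] at h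
    simp only [Finset.offDiag_card] at h
    exact h
  set TK := Tf.filter (fun L => K ≤ (Pf.filter (· ∈ L)).card) with hTKdef
  have hsplit : n * n - n
      = (∑ L ∈ TK, ((Pf.filter (· ∈ L)).card * (Pf.filter (· ∈ L)).card - (Pf.filter (· ∈ L)).card))
      + (∑ L ∈ Tf.filter (fun L => ¬ K ≤ (Pf.filter (· ∈ L)).card),
          ((Pf.filter (· ∈ L)).card * (Pf.filter (· ∈ L)).card - (Pf.filter (· ∈ L)).card)) := by
    rw [hsumN, hTKdef, Finset.sum_filter_add_sum_filter_not]
  have hpoorN : (∑ L ∈ Tf.filter (fun L => ¬ K ≤ (Pf.filter (· ∈ L)).card),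
      ((Pf.filter (· ∈ L)).card * (Pf.filter (· ∈ L)).card - (Pf.filter (· ∈ L)).card))
      ≤ Tf.card * (K * K) := by
    calc (∑ L ∈ Tf.filter (fun L => ¬ K ≤ (Pf.filter (· ∈ L)).card),
        ((Pf.filter (· ∈ L)).card * (Pf.filter (· ∈ L)).card - (Pf.filter (· ∈ L)).card))
        ≤ (Tf.filter (fun L => ¬ K ≤ (Pf.filter (· ∈ L)).card)).card * (K * K) := by
          rw [← smul_eq_mul]
          refine Finset.sum_le_card_nsmul _ _ _ ?_
          intro L hL
          have hc : (Pf.filter (· ∈ L)).card < K := by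
            have := (Finset.mem_filter.1 hL).2; omega
          have h1 : (Pf.filter (· ∈ L)).card * (Pf.filter (· ∈ L)).card ≤ K * K :=
            Nat.mul_le_mul hc.le hc.le
          omega
    _ ≤ Tf.card * (K * K) := Nat.mul_le_mul_right _ (Finset.card_filter_le _ _)
  have hswap := sum_sq_swap Pf TK
  rw [hPfcard] at hswap
  -- counts vanish past n/100
  have hqzero : ∀ j : ℕ, n ≤ 100 * (j+1) →
      (TK.filter (fun L => j < (Pf.filter (· ∈ L)).card)).card = 0 := by
    intro j hj
    rw [Finset.card_eq_zero, Finset.eq_empty_iff_forall_notMem]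
    intro L hL
    have h1 := (Finset.mem_filter.1 hL).2
    have hLTf := (Finset.mem_filter.1 (Finset.mem_filter.1 hL).1).1
    have hline := ((hTmem L).1 hLTf).1
    have := hsmall L hline
    omega
  -- lines of TK-filters are complex lines with many points
  have hTKlines : ∀ j : ℕ, ∀ L ∈ TK.filter (fun L => j < (Pf.filter (· ∈ L)).card),
      IsComplexLine L := by
    intro j L hL
    exact ((hTmem L).1 (Finset.mem_filter.1 (Finset.mem_filter.1 hL).1).1).1
  have hTKpts : ∀ j : ℕ, ∀ L ∈ TK.filter (fun L => j < (Pf.filter (· ∈ L)).card),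
      j + 1 ≤ (hP.toFinset.filter (· ∈ L)).card := by
    intro j L hL
    exact (Finset.mem_filter.1 hL).2
  -- count of all K-rich lines
  have hTKbound : (TK.card : ℝ) ≤ 64*B^3*(n:ℝ)^2/(K:ℝ)^3 + 4*B*(n:ℝ)/(K:ℝ) := by
    have happ := rich_ST A hST P hP TK
      (fun L hL => ((hTmem L).1 (Finset.mem_filter.1 hL).1).1) K
      (fun L hL => (Finset.mem_filter.1 hL).2)
      (by rw [← hB]; exact hBK)
    rw [← hn, ← hB] at happ
    exact happ
  -- termwise bound
  have hterm : ∀ j ∈ Finset.range n,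
      (2 * (j:ℝ) * ((TK.filter (fun L => j < (Pf.filter (· ∈ L)).card)).card : ℝ))
        ≤ (if j < K then 2*(K:ℝ)*(TK.card:ℝ) else 0)
          + (if K ≤ j then 128*B^3*(n:ℝ)^2*(((j:ℝ)+1)^2)⁻¹ else 0)
          + (if (j+1)*(j+1) < 16*n then 8*B*(n:ℝ) else 0)
          + (if 100*(j+1) < n then 4*(n:ℝ) else 0) := by
    intro j _
    have hj0 : (0:ℝ) ≤ (j:ℝ) := Nat.cast_nonneg j
    have hTK0 : (0:ℝ) ≤ (TK.card:ℝ) := Nat.cast_nonneg _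
    have hq0 : (0:ℝ) ≤ ((TK.filter (fun L => j < (Pf.filter (· ∈ L)).card)).card : ℝ) :=
      Nat.cast_nonneg _
    have hi1 := myIte_nonneg (j < K) (2*(K:ℝ)*(TK.card:ℝ)) (by positivity)
    have hi2 := myIte_nonneg (K ≤ j) (128*B^3*(n:ℝ)^2*(((j:ℝ)+1)^2)⁻¹) (by positivity)
    have hi3 := myIte_nonneg ((j+1)*(j+1) < 16*n) (8*B*(n:ℝ)) (by positivity)
    have hi4 := myIte_nonneg (100*(j+1) < n) (4*(n:ℝ)) (by positivity)
    by_cases hjK : j < K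
    · rw [if_pos hjK]
      have hqle : ((TK.filter (fun L => j < (Pf.filter (· ∈ L)).card)).card : ℝ) ≤ TK.card := by
        exact_mod_cast Finset.card_filter_le _ _
      have hjle : (j:ℝ) ≤ (K:ℝ) := by exact_mod_cast hjK.le
      nlinarith [hq0, hTK0, hqle, hjle, hK0]
    · push_neg at hjK
      rw [if_neg (not_lt.2 hjK), if_pos hjK]
      have hc2a : (0:ℝ) ≤ 128*B^3*(n:ℝ)^2*(((j:ℝ)+1)^2)⁻¹ := by positivity
      by_cases hstop : 100*(j+1) < n
      · rw [if_pos hstop]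
        by_cases hsz : (j+1)*(j+1) < 16*n
        · rw [if_pos hsz]
          -- Szemerédi–Trotter branch
          have happ := rich_ST A hST P hP
            (TK.filter (fun L => j < (Pf.filter (· ∈ L)).card))
            (hTKlines j) (j+1) (hTKpts j) ?_
          · rw [← hn, ← hB] at happ
            have hcast : ((j+1:ℕ):ℝ) = (j:ℝ)+1 := by push_cast; ring
            rw [hcast] at happ
            have ht0 : (0:ℝ) < (j:ℝ)+1 := by positivity
            have hkey : 2*((j:ℝ)+1) * (64*B^3*(n:ℝ)^2/((j:ℝ)+1)^3 + 4*B*(n:ℝ)/((j:ℝ)+1))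
                = 128*B^3*(n:ℝ)^2*(((j:ℝ)+1)^2)⁻¹ + 8*B*(n:ℝ) := by
              field_simp
              ring
            nlinarith [happ, hq0, ht0, hi4]
          · rw [← hB]
            have hjKR : (K:ℝ) ≤ (j:ℝ) := by exact_mod_cast hjK
            push_cast
            linarith
        · rw [if_neg hsz]
          push_neg at hsz
          have happ := rich_unconditional Pf
            (TK.filter (fun L => j < (Pf.filter (· ∈ L)).card))
            (j+1) (hTKlines j) (hTKpts j)
            (by rw [hPfcard]; omega) (by omega)
          rw [hPfcard] at happ
          have hcast : ((j+1:ℕ):ℝ) = (j:ℝ)+1 := by push_cast; ring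
          rw [hcast] at happ
          linarith [happ, hq0, hc2a, hi3]
      · rw [if_neg hstop]
        push_neg at hstop
        rw [hqzero j hstop]
        simp only [Nat.cast_zero, mul_zero, add_zero]
        linarith [hc2a, hi3]
  -- sum the termwise bounds
  have hsrichR : ((∑ L ∈ TK, ((Pf.filter (· ∈ L)).card * (Pf.filter (· ∈ L)).card
      - (Pf.filter (· ∈ L)).card) : ℕ) : ℝ)
      ≤ ∑ j ∈ Finset.range n,
        ((if j < K then 2*(K:ℝ)*(TK.card:ℝ) else 0)
          + (if K ≤ j then 128*B^3*(n:ℝ)^2*(((j:ℝ)+1)^2)⁻¹ else 0)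
          + (if (j+1)*(j+1) < 16*n then 8*B*(n:ℝ) else 0)
          + (if 100*(j+1) < n then 4*(n:ℝ) else 0)) := by
    rw [hswap]
    push_cast
    exact Finset.sum_le_sum hterm
  -- split the sum of four pieces
  have hsplit4 : (∑ j ∈ Finset.range n,
        ((if j < K then 2*(K:ℝ)*(TK.card:ℝ) else 0)
          + (if K ≤ j then 128*B^3*(n:ℝ)^2*(((j:ℝ)+1)^2)⁻¹ else 0)
          + (if (j+1)*(j+1) < 16*n then 8*B*(n:ℝ) else 0)
          + (if 100*(j+1) < n then 4*(n:ℝ) else 0)))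
      = (∑ j ∈ Finset.range n, (if j < K then 2*(K:ℝ)*(TK.card:ℝ) else 0))
        + (∑ j ∈ Finset.range n, (if K ≤ j then 128*B^3*(n:ℝ)^2*(((j:ℝ)+1)^2)⁻¹ else 0))
        + (∑ j ∈ Finset.range n, (if (j+1)*(j+1) < 16*n then 8*B*(n:ℝ) else 0))
        + (∑ j ∈ Finset.range n, (if 100*(j+1) < n then 4*(n:ℝ) else 0)) := by
    rw [Finset.sum_add_distrib, Finset.sum_add_distrib, Finset.sum_add_distrib]
  -- bound the four sums
  have hS1 : (∑ j ∈ Finset.range n, if j < K then 2*(K:ℝ)*(TK.card:ℝ) else 0)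
      ≤ 128*B^3*(n:ℝ)^2/(K:ℝ) + 8*B*(K:ℝ)*(n:ℝ) := by
    rw [← Finset.sum_filter, range_filter_lt n K hKn, Finset.sum_const, nsmul_eq_mul,
      Finset.card_range]
    calc (K:ℝ) * (2*(K:ℝ)*(TK.card:ℝ)) = 2*(K:ℝ)^2*(TK.card:ℝ) := by ring
    _ ≤ 2*(K:ℝ)^2*(64*B^3*(n:ℝ)^2/(K:ℝ)^3 + 4*B*(n:ℝ)/(K:ℝ)) := by
        apply mul_le_mul_of_nonneg_left hTKbound (by positivity)
    _ = 128*B^3*(n:ℝ)^2/(K:ℝ) + 8*B*(K:ℝ)*(n:ℝ) := by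
        field_simp
        ring
  have hS2a : (∑ j ∈ Finset.range n, if K ≤ j then 128*B^3*(n:ℝ)^2*(((j:ℝ)+1)^2)⁻¹ else 0)
      ≤ 128*B^3*(n:ℝ)^2*((K:ℝ))⁻¹ := by
    rw [← Finset.sum_filter, range_filter_ge n K, ← Finset.mul_sum]
    have hre : (∑ j ∈ Finset.Ico K n, (((j:ℝ)+1)^2)⁻¹) = ∑ t ∈ Finset.Ioc K n, ((t:ℝ)^2)⁻¹ := by
      rw [← ico_image_succ K n, Finset.sum_image (by intro x _ y _ h; exact Nat.succ_injective h)]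
      refine Finset.sum_congr rfl (fun j _ => ?_)
      push_cast
      ring
    rw [hre]
    have hioc := sum_Ioc_inv_sq_le_sub (α := ℝ) (show K ≠ 0 by omega) hKn
    have hninv : (0:ℝ) ≤ (n:ℝ)⁻¹ := by positivity
    have hle : (∑ t ∈ Finset.Ioc K n, ((t:ℝ)^2)⁻¹) ≤ (K:ℝ)⁻¹ := by linarith
    apply mul_le_mul_of_nonneg_left hle (by positivity)
  have hS2b : (∑ j ∈ Finset.range n, if (j+1)*(j+1) < 16*n then 8*B*(n:ℝ) else 0)
      ≤ 32*B*(n:ℝ)*Real.sqrt n := by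
    rw [← Finset.sum_filter, Finset.sum_const, nsmul_eq_mul]
    have hsub : (Finset.range n).filter (fun j => (j+1)*(j+1) < 16*n)
        ⊆ Finset.range (Nat.sqrt (16*n)) := by
      intro j hj
      have h := (Finset.mem_filter.1 hj).2
      have h2 : j+1 ≤ Nat.sqrt (16*n) := Nat.le_sqrt.2 (le_of_lt h)
      exact Finset.mem_range.2 (by omega)
    have hcard : (((Finset.range n).filter (fun j => (j+1)*(j+1) < 16*n)).card : ℝ)
        ≤ ((Nat.sqrt (16*n) : ℕ) : ℝ) := by
      exact_mod_cast (Finset.card_le_card hsub).trans (by rw [Finset.card_range])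
    have hcastsqrt : ((Nat.sqrt (16*n) : ℕ) : ℝ) ≤ 4*Real.sqrt n := by
      have h1 : ((Nat.sqrt (16*n):ℕ):ℝ)^2 ≤ ((16*n:ℕ):ℝ) := by
        exact_mod_cast Nat.sqrt_le' (16*n)
      have h2 := Real.le_sqrt_of_sq_le h1
      have h3 : Real.sqrt ((16*n:ℕ):ℝ) = 4*Real.sqrt n := by
        push_cast
        rw [show (16:ℝ)*(n:ℝ) = (4:ℝ)^2*(n:ℝ) by norm_num,
          Real.sqrt_mul (by positivity), Real.sqrt_sq (by norm_num)]
      rw [h3] at h2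
      exact h2
    calc (((Finset.range n).filter (fun j => (j+1)*(j+1) < 16*n)).card : ℝ) * (8*B*(n:ℝ))
        ≤ (4*Real.sqrt n) * (8*B*(n:ℝ)) := by
          apply mul_le_mul_of_nonneg_right (hcard.trans hcastsqrt) (by positivity)
    _ = 32*B*(n:ℝ)*Real.sqrt n := by ring
  have hS3 : (∑ j ∈ Finset.range n, if 100*(j+1) < n then 4*(n:ℝ) else 0)
      ≤ 4*(n:ℝ)*((n:ℝ)/100) := by
    rw [← Finset.sum_filter, Finset.sum_const, nsmul_eq_mul]
    have hsub : (Finset.range n).filter (fun j => 100*(j+1) < n) ⊆ Finset.range (n/100) := by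
      intro j hj
      have h := (Finset.mem_filter.1 hj).2
      exact Finset.mem_range.2 (by omega)
    have hcard : (((Finset.range n).filter (fun j => 100*(j+1) < n)).card : ℝ) ≤ (n:ℝ)/100 := by
      calc (((Finset.range n).filter (fun j => 100*(j+1) < n)).card : ℝ)
          ≤ ((n/100 : ℕ) : ℝ) := by
            exact_mod_cast (Finset.card_le_card hsub).trans (by rw [Finset.card_range])
      _ ≤ (n:ℝ)/100 := Nat.cast_div_le
    calc (((Finset.range n).filter (fun j => 100*(j+1) < n)).card : ℝ) * (4*(n:ℝ))
        ≤ ((n:ℝ)/100) * (4*(n:ℝ)) := mul_le_mul_of_nonneg_right hcard (by positivity)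
    _ = 4*(n:ℝ)*((n:ℝ)/100) := by ring
  -- cast the poor-lines bound and the counting identity
  have hpoorR : ((∑ L ∈ Tf.filter (fun L => ¬ K ≤ (Pf.filter (· ∈ L)).card),
      ((Pf.filter (· ∈ L)).card * (Pf.filter (· ∈ L)).card - (Pf.filter (· ∈ L)).card) : ℕ) : ℝ)
      ≤ (Tf.card:ℝ)*((K:ℝ)*(K:ℝ)) := by
    exact_mod_cast hpoorN
  have hnsub : n ≤ n*n := Nat.le_mul_of_pos_left n hnpos
  have hidR : (n:ℝ)*(n:ℝ) - (n:ℝ)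
      = ((∑ L ∈ TK, ((Pf.filter (· ∈ L)).card * (Pf.filter (· ∈ L)).card
          - (Pf.filter (· ∈ L)).card) : ℕ) : ℝ)
        + ((∑ L ∈ Tf.filter (fun L => ¬ K ≤ (Pf.filter (· ∈ L)).card),
            ((Pf.filter (· ∈ L)).card * (Pf.filter (· ∈ L)).card
              - (Pf.filter (· ∈ L)).card) : ℕ) : ℝ) := by
    rw [← Nat.cast_mul, ← Nat.cast_sub hnsub]
    exact_mod_cast hsplit
  -- numeric comparisons
  have t1a : 128*B^3*(n:ℝ)^2/(K:ℝ) ≤ (n:ℝ)^2/100 := by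
    rw [div_le_div_iff₀ hK0 (by norm_num : (0:ℝ) < 100)]
    nlinarith [mul_le_mul_of_nonneg_left hKR (sq_nonneg (n:ℝ)),
      mul_nonneg (sq_nonneg (n:ℝ)) (by positivity : (0:ℝ) ≤ B^3)]
  have t1b : 128*B^3*(n:ℝ)^2*((K:ℝ))⁻¹ ≤ (n:ℝ)^2/100 := by
    rw [← div_eq_mul_inv]
    exact t1a
  have t2 : 8*B*(K:ℝ)*(n:ℝ) ≤ (n:ℝ)^2/10 := by
    nlinarith [mul_le_mul_of_nonneg_right h80 hn0']
  have t3 : 32*B*(n:ℝ)*Real.sqrt n ≤ (n:ℝ)^2/20 := by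
    have hs0 : (0:ℝ) ≤ Real.sqrt n := Real.sqrt_nonneg _
    have hss : Real.sqrt n * Real.sqrt n = (n:ℝ) := Real.mul_self_sqrt hn0'
    nlinarith [mul_nonneg (mul_nonneg hn0' hs0) (sub_nonneg.2 hsqB), hss]
  have t5 : (n:ℝ) ≤ (n:ℝ)*(n:ℝ)/200 := by nlinarith [hn200, hn0']
  -- conclude
  have hhalf : (n:ℝ)^2/2 ≤ (Tf.card:ℝ)*((K:ℝ)*(K:ℝ)) := by
    rw [hsplit4] at hsrichR
    nlinarith [hsrichR, hS1, hS2a, hS2b, hS3, t1a, t1b, t2, t3, t5, hpoorR, hidR]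
  calc min (1/(2*(K:ℝ)^2)) (1/(N:ℝ)^2) * (n:ℝ)^2
      ≤ (1/(2*(K:ℝ)^2)) * (n:ℝ)^2 :=
        mul_le_mul_of_nonneg_right (min_le_left _ _) (sq_nonneg _)
  _ ≤ (Tf.card:ℝ) := by
      rw [div_mul_eq_mul_div, one_mul, div_le_iff₀ (by positivity)]
      nlinarith [hhalf]
end
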